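/- Let a, b ∈ ℝ with a ≠ 0. Then the planar Liénard system ẋ = y − (ax + bx²), ẏ = −x has no nonconstant periodic solution; that is, there is no nonconstant differentiable γ = (x,y) : ℝ → ℝ² and T > 0 with γ(t+T) = γ(t) for all t satisfying x'(t) = y(t) − a x(t) − b x(t)² and y'(t) = −x(t) for all t. -/

import Mathlib

/-- If `f` has nonpositive derivative `g` everywhere and is periodic,
then `g` is identically zero. -/
lemma aux_periodic_antideriv (f g : ℝ → ℝ) (T : ℝ) (hT : 0 < T)
    (hf : ∀ t, HasDerivAt f (g t) t) (hg : ∀ t, g t ≤ 0)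
    (hp : ∀ t, f (t + T) = f t) : ∀ t, g t = 0 := by
  have hmono : Antitone f := by
    apply antitone_of_deriv_nonpos
    · exact fun t => (hf t).differentiableAt
    · intro t; rw [(hf t).deriv]; exact hg t
  have hper : Function.Periodic f T := hp
  have hconst : ∀ t, f t = f 0 := by
    intro t
    rcases le_total t 0 with h | h
    · -- t ≤ 0 : f 0 ≤ f t ; and f t = f (t + nT) ≤ f 0
      obtain ⟨n, hn⟩ := exists_nat_ge (-t / T)
      have hnT : -t ≤ n * T := by rw [div_le_iff₀ hT] at hn; linarith
      have h1 : (0:ℝ) ≤ t + n * T := by linarith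
      have h2 : f (t + n * T) = f t := (hper.nat_mul n) t
      have h3 : f (t + n * T) ≤ f 0 := hmono h1
      have h4 : f 0 ≤ f t := hmono h
      linarith
    · -- 0 ≤ t : f t ≤ f 0 ; and f 0 = f (0 + nT) ≤ f t
      obtain ⟨n, hn⟩ := exists_nat_ge (t / T)
      have hnT : t ≤ n * T := by rw [div_le_iff₀ hT] at hn; linarith
      have h1 : t ≤ 0 + n * T := by linarith
      have h2 : f (0 + n * T) = f 0 := (hper.nat_mul n) 0
      have h3 : f (0 + n * T) ≤ f t := hmono h1
      have h4 : f t ≤ f 0 := hmono h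
      linarith
  intro t
  have hdf : g t = deriv f t := ((hf t).deriv).symm
  have hfc : f = fun _ => f 0 := funext hconst
  rw [hdf, hfc, deriv_const]

/-- A Liénard system `ẋ = y − (ax + bx²), ẏ = −x` with `a ≠ 0` has no nonconstant
periodic solution. -/
theorem stmt_8 (a b : ℝ) (ha : a ≠ 0) :
    ¬ ∃ (γ : ℝ → ℝ × ℝ) (T : ℝ),
      Differentiable ℝ γ ∧ 0 < T ∧ (∀ t : ℝ, γ (t + T) = γ t) ∧
      (∃ t t' : ℝ, γ t ≠ γ t') ∧
      (∀ t : ℝ, deriv γ t =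
        ((γ t).2 - a * (γ t).1 - b * (γ t).1 ^ 2, -(γ t).1)) := by
  rintro ⟨γ, T, hdiff, hT, hper, ⟨t₀, t₁, hne⟩, hode⟩
  set x : ℝ → ℝ := fun t => (γ t).1 with hxdef
  set y : ℝ → ℝ := fun t => (γ t).2 with hydef
  have hγ' : ∀ t, HasDerivAt γ
      ((γ t).2 - a * (γ t).1 - b * (γ t).1 ^ 2, -(γ t).1) t := by
    intro t
    have h := (hdiff t).hasDerivAt
    rwa [hode t] at h
  have hx : ∀ t, HasDerivAt x (y t - a * x t - b * x t ^ 2) t :=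
    fun t => (hγ' t).fst
  have hy : ∀ t, HasDerivAt y (-(x t)) t := fun t => (hγ' t).snd
  -- the Dulac-type function
  set g : ℝ → ℝ := fun t => -2 * a ^ 2 * Real.exp (-2 * b * y t) * (x t) ^ 2
    with hgdef
  have hgle : ∀ t, g t ≤ 0 := by
    intro t
    have h1 : (0:ℝ) < Real.exp (-2 * b * y t) := Real.exp_pos _
    have h2 : (0:ℝ) ≤ (a * x t) ^ 2 := sq_nonneg _
    have h3 : g t = -2 * ((a * x t) ^ 2 * Real.exp (-2 * b * y t)) := by
      simp only [hgdef]; ring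
    rw [h3]
    nlinarith [mul_nonneg h2 h1.le]
  have key : ∀ t, x t = 0 := by
    have main : ∃ f : ℝ → ℝ, (∀ t, HasDerivAt f (g t) t) ∧
        (∀ t, f (t + T) = f t) := by
      rcases eq_or_ne b 0 with hb | hb
      · refine ⟨fun t => a * ((x t) ^ 2 + (y t) ^ 2), fun t => ?_, fun t => ?_⟩
        · have hd := (((hx t).fun_pow 2).fun_add ((hy t).fun_pow 2)).const_mul a
          refine hd.congr_deriv ?_
          simp [hgdef, hb]
          try ring
        · simp only [hxdef, hydef, hper t]
      · refine ⟨fun t => a * (Real.exp (-2 * b * y t) *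
            ((x t) ^ 2 - y t / b - 1 / (2 * b ^ 2))), fun t => ?_, fun t => ?_⟩
        · have he : HasDerivAt (fun t => Real.exp (-2 * b * y t))
              (Real.exp (-2 * b * y t) * (-2 * b * -(x t))) t :=
            ((hy t).const_mul (-2 * b)).exp
          have hin : HasDerivAt (fun t => (x t) ^ 2 - y t / b - 1 / (2 * b ^ 2))
              (2 * x t ^ (2-1) * (y t - a * x t - b * x t ^ 2) - (-(x t)) / b) t := by
            have := (((hx t).fun_pow 2).fun_sub ((hy t).div_const b)).sub_const (1 / (2 * b ^ 2))
            refine this.congr_deriv ?_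
            try push_cast
            try ring
          have hd := (he.mul hin).const_mul a
          refine hd.congr_deriv ?_
          simp only [hgdef]
          field_simp
          ring
        · simp only [hxdef, hydef, hper t]
    obtain ⟨f, hf, hfp⟩ := main
    have hg0 := aux_periodic_antideriv f g T hT hf hgle hfp
    intro t
    have := hg0 t
    simp only [hgdef] at this
    have h1 : (0:ℝ) < Real.exp (-2 * b * y t) := Real.exp_pos _
    have ha2 : a ^ 2 ≠ 0 := pow_ne_zero 2 ha
    have hx2 : (x t) ^ 2 = 0 := by
      by_contra hxx
      have : -2 * a ^ 2 * Real.exp (-2 * b * y t) * x t ^ 2 ≠ 0 := by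
        positivity
      exact this ‹_›
    exact pow_eq_zero_iff (n := 2) (by norm_num) |>.mp hx2
  -- from x ≡ 0 deduce y ≡ 0
  have hyz : ∀ t, y t = 0 := by
    intro t
    have hx0 : x = fun _ => (0:ℝ) := funext key
    have h1 : HasDerivAt x (y t - a * x t - b * x t ^ 2) t := hx t
    rw [hx0] at h1
    have h2 : HasDerivAt (fun _ : ℝ => (0:ℝ)) 0 t := hasDerivAt_const t 0
    have := h1.unique h2
    simpa using this
  apply hne
  have h0 : γ t₀ = (0, 0) := Prod.ext (key t₀) (hyz t₀)
  have h1 : γ t₁ = (0, 0) := Prod.ext (key t₁) (hyz t₁)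
  rw [h0, h1]
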